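/- Let H be a Hopf algebra over k, A a bialgebra, j : H → A and π : A → H bialgebra maps with π∘j = id_H, Π(a) = a₁j(S(π(a₂))), and R = Im Π = A^{co π}. Then Π(j(h)a) = j(h₁) Π(a) j(S(h₂)) for all h ∈ H and a ∈ A, and Π(a j(h)) = Π(a) ε(h) for all a ∈ A, h ∈ H. -/

import Mathlib

open TensorProduct Coalgebra

universe u

/-- The projection `Π = id_A * (j ∘ S ∘ π)`, i.e. `Π(a) = a₁ j(S(π(a₂)))`. -/
noncomputable def PiMap {k H A : Type u} [Field k] [Ring H] [Ring A]
    [HopfAlgebra k H] [Bialgebra k A] (j : H →ₐc[k] A) (π : A →ₐc[k] H) : A →ₗ[k] A :=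
  LinearMap.mul' k A
    ∘ₗ TensorProduct.map LinearMap.id
        ((j : H →ₗ[k] A) ∘ₗ HopfAlgebra.antipode (R := k) ∘ₗ (π : A →ₗ[k] H))
    ∘ₗ (Coalgebra.comul : A →ₗ[k] A ⊗[k] A)

open HopfAlgebra


section Conv
variable {k : Type u} [Field k] {C M : Type u} [AddCommGroup C] [Module k C] [Coalgebra k C]
  [Ring M] [Algebra k M]

noncomputable def convMul (f g : C →ₗ[k] M) : C →ₗ[k] M :=
  LinearMap.mul' k M ∘ₗ TensorProduct.map f g ∘ₗ (Coalgebra.comul : C →ₗ[k] C ⊗[k] C)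

noncomputable def convOne : C →ₗ[k] M :=
  Algebra.linearMap k M ∘ₗ (Coalgebra.counit : C →ₗ[k] k)

lemma conv_repr (f g : C →ₗ[k] M) (a : C) {ι : Type*} (r : Coalgebra.Repr k a ι) :
    convMul f g a = ∑ i ∈ r.index, f (r.left i) * g (r.right i) := by
  simp only [convMul, LinearMap.comp_apply, ← r.eq, map_sum, TensorProduct.map_tmul,
    LinearMap.mul'_apply]

lemma conv_unit_left (f : C →ₗ[k] M) : convMul convOne f = f := by
  ext a
  set r := ℛ k a
  rw [conv_repr _ _ a r]
  have h := Coalgebra.sum_counit_tmul_map_eq (R := k) f a (repr := r)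
  apply_fun (TensorProduct.lid k M) at h
  simp only [map_sum, TensorProduct.lid_tmul, one_smul] at h
  simp only [convOne, LinearMap.comp_apply, Algebra.linearMap_apply]
  simp_rw [← Algebra.smul_def]
  exact h

lemma conv_unit_right (f : C →ₗ[k] M) : convMul f convOne = f := by
  ext a
  set r := ℛ k a
  rw [conv_repr _ _ a r]
  have h := Coalgebra.sum_map_tmul_counit_eq (R := k) f a (repr := r)
  apply_fun (TensorProduct.rid k M) at h
  simp only [map_sum, TensorProduct.rid_tmul, one_smul] at h
  simp only [convOne, LinearMap.comp_apply, Algebra.linearMap_apply]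
  calc ∑ i ∈ r.index, f (r.left i) * algebraMap k M (counit (r.right i))
      = ∑ i ∈ r.index, counit (R := k) (r.right i) • f (r.left i) := by
        refine Finset.sum_congr rfl fun i _ => ?_
        rw [← Algebra.commutes, ← Algebra.smul_def]
    _ = f a := h

lemma conv_assoc (f g h : C →ₗ[k] M) : convMul (convMul f g) h = convMul f (convMul g h) := by
  ext a
  set r := ℛ k a with hr
  have key := Coalgebra.sum_map_tmul_tmul_eq (R := k) f g h a (repr := r)
    (a₁ := fun i => ℛ k (r.left i)) (a₂ := fun i => ℛ k (r.right i))
  apply_fun (LinearMap.mul' k M ∘ₗ LinearMap.lTensor M (LinearMap.mul' k M)) at key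
  simp only [map_sum, LinearMap.comp_apply, LinearMap.lTensor_tmul,
    LinearMap.mul'_apply] at key
  rw [conv_repr _ _ a r, conv_repr _ _ a r]
  calc ∑ i ∈ r.index, convMul f g (r.left i) * h (r.right i)
      = ∑ i ∈ r.index, ∑ j ∈ (ℛ k (r.left i)).index,
          f ((ℛ k (r.left i)).left j) * ((g ((ℛ k (r.left i)).right j)) * h (r.right i)) := by
        refine Finset.sum_congr rfl fun i _ => ?_
        rw [conv_repr _ _ _ (ℛ k (r.left i)), Finset.sum_mul]
        simp_rw [mul_assoc]
    _ = ∑ i ∈ r.index, ∑ j ∈ (ℛ k (r.right i)).index,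
          f (r.left i) * (g ((ℛ k (r.right i)).left j) * h ((ℛ k (r.right i)).right j)) :=
        key.symm
    _ = ∑ i ∈ r.index, f (r.left i) * convMul g h (r.right i) := by
        refine Finset.sum_congr rfl fun i _ => ?_
        rw [conv_repr _ _ _ (ℛ k (r.right i)), Finset.mul_sum]

lemma conv_comp {C' : Type u} [AddCommGroup C'] [Module k C'] [Coalgebra k C']
    (f g : C →ₗ[k] M) (φ : C' →ₗ[k] C)
    (hcomul : (Coalgebra.comul : C →ₗ[k] C ⊗[k] C) ∘ₗ φ = TensorProduct.map φ φ ∘ₗ Coalgebra.comul) :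
    convMul (f ∘ₗ φ) (g ∘ₗ φ) = convMul f g ∘ₗ φ := by
  simp only [convMul, TensorProduct.map_comp, LinearMap.comp_assoc, hcomul]

end Conv

section
variable {k : Type u} [Field k] {H : Type u} [Ring H] [HopfAlgebra k H]

lemma map_mul'_ttTC (s t : H ⊗[k] H) :
    TensorProduct.map (LinearMap.mul' k H) (LinearMap.mul' k H)
      (TensorProduct.tensorTensorTensorComm k H H H H (s ⊗ₜ[k] t)) = s * t := by
  induction s with
  | zero => simp
  | add u v hu hv => simp_all [add_tmul, add_mul]
  | tmul x y =>
    induction t with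
    | zero => simp
    | add u v hu hv => simp_all [tmul_add, mul_add]
    | tmul u v => simp [Algebra.TensorProduct.tmul_mul_tmul]

lemma comul_comp_mul' :
    (Coalgebra.comul : H →ₗ[k] H ⊗[k] H) ∘ₗ LinearMap.mul' k H
      = TensorProduct.map (LinearMap.mul' k H) (LinearMap.mul' k H)
          ∘ₗ (Coalgebra.comul : H ⊗[k] H →ₗ[k] (H ⊗[k] H) ⊗[k] (H ⊗[k] H)) := by
  ext a b
  simp [Bialgebra.comul_mul]
  exact (map_mul'_ttTC (comul a) (comul b)).symm

lemma counit_comp_mul' :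
    (Coalgebra.counit : H →ₗ[k] k) ∘ₗ LinearMap.mul' k H
      = (Coalgebra.counit : H ⊗[k] H →ₗ[k] k) := by
  ext a b
  simp [mul_comm]
end

section
variable {k : Type u} [Field k] {H : Type u} [Ring H] [HopfAlgebra k H]

lemma conv_id_antipode :
    convMul (LinearMap.id : H →ₗ[k] H) (antipode (R := k)) = convOne := by
  rw [convMul, convOne]
  have : TensorProduct.map (LinearMap.id : H →ₗ[k] H) (antipode (R := k))
      = LinearMap.lTensor (R := k) (N := H) (P := H) H (antipode (R := k)) := rfl
  rw [this, ← LinearMap.comp_assoc, ← HopfAlgebra.mul_antipode_lTensor_comul,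
    LinearMap.comp_assoc]

lemma conv_G'_F :
    convMul (LinearMap.mul' k H ∘ₗ TensorProduct.map (antipode (R := k)) (antipode (R := k))
        ∘ₗ (TensorProduct.comm k H H).toLinearMap)
      (LinearMap.mul' k H) = (convOne : H ⊗[k] H →ₗ[k] H) := by
  apply TensorProduct.ext'
  intro a b
  set ra := ℛ k a
  set rb := ℛ k b
  have hcom : Coalgebra.comul (R := k) (a ⊗ₜ[k] b)
      = ∑ i ∈ ra.index, ∑ j ∈ rb.index,
          (ra.left i ⊗ₜ[k] rb.left j) ⊗ₜ[k] (ra.right i ⊗ₜ[k] rb.right j) := by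
    have hstruct : Coalgebra.comul (R := k) (a ⊗ₜ[k] b)
        = (TensorProduct.tensorTensorTensorComm k H H H H)
            (TensorProduct.map Coalgebra.comul Coalgebra.comul (a ⊗ₜ[k] b)) := rfl
    rw [hstruct, TensorProduct.map_tmul, ← ra.eq, ← rb.eq, TensorProduct.sum_tmul]
    simp_rw [TensorProduct.tmul_sum]
    simp [TensorProduct.tensorTensorTensorComm_tmul]
  rw [convMul, LinearMap.comp_apply, LinearMap.comp_apply, hcom]
  simp only [map_sum, TensorProduct.map_tmul, LinearMap.mul'_apply, LinearMap.comp_apply,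
    LinearEquiv.coe_coe, TensorProduct.comm_tmul]
  rw [Finset.sum_comm]
  have : ∀ j ∈ rb.index, ∑ i ∈ ra.index,
      antipode (R := k) (rb.left j) * antipode (R := k) (ra.left i) * (ra.right i * rb.right j)
      = Coalgebra.counit (R := k) a •
          (antipode (R := k) (rb.left j) * rb.right j) := by
    intro j _
    have h1 : ∑ i ∈ ra.index, antipode (R := k) (ra.left i) * ra.right i
        = algebraMap k H (Coalgebra.counit a) := HopfAlgebra.sum_antipode_mul_eq_algebraMap_counit ra
    calc ∑ i ∈ ra.index,
          antipode (R := k) (rb.left j) * antipode (R := k) (ra.left i) * (ra.right i * rb.right j)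
        = antipode (R := k) (rb.left j) *
            ((∑ i ∈ ra.index, antipode (R := k) (ra.left i) * ra.right i) * rb.right j) := by
          rw [Finset.sum_mul, Finset.mul_sum]
          exact Finset.sum_congr rfl fun i _ => by simp [mul_assoc]
      _ = _ := by
          rw [h1, ← Algebra.smul_def, mul_smul_comm]
  rw [Finset.sum_congr rfl this, ← Finset.smul_sum, HopfAlgebra.sum_antipode_mul_eq_algebraMap_counit rb]
  rw [convOne, LinearMap.comp_apply, Algebra.linearMap_apply]
  rw [TensorProduct.counit_tmul]
  simp [Algebra.smul_def, ← map_mul, mul_comm]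

lemma antipode_mul_anti (a b : H) :
    antipode (R := k) (a * b) = antipode (R := k) b * antipode (R := k) a := by
  set S : H →ₗ[k] H := antipode (R := k) with hS
  set F : H ⊗[k] H →ₗ[k] H := LinearMap.mul' k H with hF
  set G : H ⊗[k] H →ₗ[k] H := S ∘ₗ F with hG
  set G' : H ⊗[k] H →ₗ[k] H :=
    F ∘ₗ TensorProduct.map S S ∘ₗ (TensorProduct.comm k H H).toLinearMap with hG'
  have hFG : convMul F G = (convOne : H ⊗[k] H →ₗ[k] H) := by
    have h1 : convMul F G = convMul (LinearMap.id ∘ₗ F) (S ∘ₗ F) := by rw [LinearMap.id_comp, hG]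
    rw [h1, conv_comp _ _ _ comul_comp_mul', conv_id_antipode, convOne, convOne,
      LinearMap.comp_assoc, counit_comp_mul']
  have hG'F : convMul G' F = (convOne : H ⊗[k] H →ₗ[k] H) := conv_G'_F
  have key : G' = G := by
    calc G' = convMul G' convOne := (conv_unit_right G').symm
      _ = convMul G' (convMul F G) := by rw [hFG]
      _ = convMul (convMul G' F) G := (conv_assoc _ _ _).symm
      _ = convMul convOne G := by rw [hG'F]
      _ = G := conv_unit_left G
  have := LinearMap.congr_fun key (a ⊗ₜ[k] b)
  simpa [hG', hG, hF, hS] using this.symm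

end

section Main
variable {k H A : Type u} [Field k] [Ring H] [Ring A]
    [HopfAlgebra k H] [Bialgebra k A]

lemma PiMap_repr (j : H →ₐc[k] A) (π : A →ₐc[k] H) (x : A) {ι : Type*} (r : Coalgebra.Repr k x ι) :
    PiMap j π x = ∑ i ∈ r.index,
      r.left i * j (HopfAlgebra.antipode (R := k) (π (r.right i))) := by
  simp only [PiMap, LinearMap.comp_apply, ← r.eq, map_sum, TensorProduct.map_tmul,
    LinearMap.mul'_apply, LinearMap.id_coe, id_eq, BialgHom.coe_toLinearMap]

/- STATEMENT 13: With `Π(a) = a₁ j(S(π(a₂)))`: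
`Π(j(h)a) = j(h₁) Π(a) j(S(h₂))` for all `h ∈ H`, `a ∈ A`, and `Π(a j(h)) = ε(h) Π(a)`. -/
theorem stmt_13 {k H A : Type u} [Field k] [Ring H] [Ring A]
    [HopfAlgebra k H] [Bialgebra k A]
    (j : H →ₐc[k] A) (π : A →ₐc[k] H)
    (hπj : π.comp j = BialgHom.id k H) :
    -- `Π(j(h)a) = j(h₁) Π(a) j(S(h₂))` (as linear maps `H ⊗ A → A`):
    (PiMap j π ∘ₗ LinearMap.mul' k A ∘ₗ TensorProduct.map (j : H →ₗ[k] A) LinearMap.id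
      = LinearMap.mul' k A
        ∘ₗ (TensorProduct.comm k A A).toLinearMap
        ∘ₗ TensorProduct.map
            ((j : H →ₗ[k] A) ∘ₗ HopfAlgebra.antipode (R := k))
            (LinearMap.mul' k A ∘ₗ TensorProduct.map (j : H →ₗ[k] A) (PiMap j π))
        ∘ₗ (TensorProduct.assoc k H H A).toLinearMap
        ∘ₗ TensorProduct.map (TensorProduct.comm k H H).toLinearMap LinearMap.id
        ∘ₗ TensorProduct.map (Coalgebra.comul : H →ₗ[k] H ⊗[k] H) LinearMap.id) ∧
    -- `Π(a j(h)) = ε(h) Π(a)` (as linear maps `A ⊗ H → A`):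
    (PiMap j π ∘ₗ LinearMap.mul' k A ∘ₗ TensorProduct.map LinearMap.id (j : H →ₗ[k] A)
      = PiMap j π ∘ₗ (TensorProduct.rid k A).toLinearMap
        ∘ₗ TensorProduct.map LinearMap.id (Coalgebra.counit : H →ₗ[k] k)) := by
  have hπjh : ∀ h : H, π (j h) = h := fun h => by simpa using DFunLike.congr_fun hπj h
  have hjapp : ∀ x : H, (j : H →ₗ[k] A) x = j x := fun _ => rfl
  have hf : ∀ x : A, ((j : H →ₗ[k] A) ∘ₗ HopfAlgebra.antipode (R := k) ∘ₗ (π : A →ₗ[k] H)) x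
      = j (HopfAlgebra.antipode (R := k) (π x)) := fun x => rfl
  constructor
  · refine TensorProduct.ext' fun h a => ?_
    set rh := ℛ k h with hrh
    set ra := ℛ k a with hra
    have hcm : Coalgebra.comul (R := k) (j h * a)
        = ∑ m ∈ rh.index, ∑ i ∈ ra.index,
            (j (rh.left m) * ra.left i) ⊗ₜ[k] (j (rh.right m) * ra.right i) := by
      rw [Bialgebra.comul_mul, ← CoalgHomClass.map_comp_comul_apply j h, ← rh.eq, ← ra.eq,
        map_sum, Finset.sum_mul_sum]
      simp [Algebra.TensorProduct.tmul_mul_tmul]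
    have hL : (PiMap j π ∘ₗ LinearMap.mul' k A
          ∘ₗ TensorProduct.map (j : H →ₗ[k] A) LinearMap.id) (h ⊗ₜ[k] a)
        = ∑ m ∈ rh.index, ∑ i ∈ ra.index,
            j (rh.left m) * ra.left i *
              (j (HopfAlgebra.antipode (R := k) (π (ra.right i))) *
               j (HopfAlgebra.antipode (R := k) (rh.right m))) := by
      simp only [LinearMap.comp_apply, TensorProduct.map_tmul, LinearMap.mul'_apply,
        LinearMap.id_coe, id_eq, BialgHom.coe_toLinearMap]
      simp only [PiMap, LinearMap.comp_apply, hjapp]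
      rw [hcm]
      simp only [map_sum, TensorProduct.map_tmul, LinearMap.mul'_apply, LinearMap.id_coe, id_eq]
      refine Finset.sum_congr rfl fun m _ => Finset.sum_congr rfl fun i _ => ?_
      rw [hf, map_mul, hπjh, antipode_mul_anti, map_mul]
    have hR : (LinearMap.mul' k A
        ∘ₗ (TensorProduct.comm k A A).toLinearMap
        ∘ₗ TensorProduct.map
            ((j : H →ₗ[k] A) ∘ₗ HopfAlgebra.antipode (R := k))
            (LinearMap.mul' k A ∘ₗ TensorProduct.map (j : H →ₗ[k] A) (PiMap j π))
        ∘ₗ (TensorProduct.assoc k H H A).toLinearMap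
        ∘ₗ TensorProduct.map (TensorProduct.comm k H H).toLinearMap LinearMap.id
        ∘ₗ TensorProduct.map (Coalgebra.comul : H →ₗ[k] H ⊗[k] H) LinearMap.id) (h ⊗ₜ[k] a)
        = ∑ m ∈ rh.index,
            j (rh.left m) * PiMap j π a * j (HopfAlgebra.antipode (R := k) (rh.right m)) := by
      simp only [LinearMap.comp_apply, TensorProduct.map_tmul, LinearMap.id_coe, id_eq]
      rw [← rh.eq]
      simp only [TensorProduct.sum_tmul, map_sum, TensorProduct.map_tmul,
        LinearEquiv.coe_coe, TensorProduct.comm_tmul, TensorProduct.assoc_tmul,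
        LinearMap.comp_apply, LinearMap.mul'_apply, BialgHom.coe_toLinearMap]
    rw [hL, hR]
    rw [PiMap_repr j π a ra]
    refine (Finset.sum_congr rfl fun m _ => ?_).symm
    rw [Finset.mul_sum, Finset.sum_mul]
    exact Finset.sum_congr rfl fun i _ => by simp [mul_assoc]
  · refine TensorProduct.ext' fun a h => ?_
    set rh := ℛ k h with hrh
    set ra := ℛ k a with hra
    have hcm : Coalgebra.comul (R := k) (a * j h)
        = ∑ i ∈ ra.index, ∑ m ∈ rh.index,
            (ra.left i * j (rh.left m)) ⊗ₜ[k] (ra.right i * j (rh.right m)) := by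
      rw [Bialgebra.comul_mul, ← CoalgHomClass.map_comp_comul_apply j h, ← rh.eq, ← ra.eq,
        map_sum, Finset.sum_mul_sum]
      simp [Algebra.TensorProduct.tmul_mul_tmul]
    have hL : (PiMap j π ∘ₗ LinearMap.mul' k A
          ∘ₗ TensorProduct.map LinearMap.id (j : H →ₗ[k] A)) (a ⊗ₜ[k] h)
        = ∑ i ∈ ra.index, ∑ m ∈ rh.index,
            ra.left i * j (rh.left m) *
              (j (HopfAlgebra.antipode (R := k) (rh.right m)) *
               j (HopfAlgebra.antipode (R := k) (π (ra.right i)))) := by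
      simp only [LinearMap.comp_apply, TensorProduct.map_tmul, LinearMap.mul'_apply,
        LinearMap.id_coe, id_eq, BialgHom.coe_toLinearMap]
      simp only [PiMap, LinearMap.comp_apply, hjapp]
      rw [hcm]
      simp only [map_sum, TensorProduct.map_tmul, LinearMap.mul'_apply, LinearMap.id_coe, id_eq]
      refine Finset.sum_congr rfl fun i _ => Finset.sum_congr rfl fun m _ => ?_
      rw [hf, map_mul, hπjh, antipode_mul_anti, map_mul]
    have hR : (PiMap j π ∘ₗ (TensorProduct.rid k A).toLinearMap
          ∘ₗ TensorProduct.map LinearMap.id (Coalgebra.counit : H →ₗ[k] k)) (a ⊗ₜ[k] h)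
        = Coalgebra.counit (R := k) h • PiMap j π a := by
      simp only [LinearMap.comp_apply, TensorProduct.map_tmul, LinearMap.id_coe, id_eq,
        LinearEquiv.coe_coe, TensorProduct.rid_tmul, map_smul]
    rw [hL, hR, PiMap_repr j π a ra, Finset.smul_sum]
    refine Finset.sum_congr rfl fun i _ => ?_
    have hmid : ∑ m ∈ rh.index,
        j (rh.left m) * j (HopfAlgebra.antipode (R := k) (rh.right m))
        = algebraMap k A (Coalgebra.counit (R := k) h) := by
      simp_rw [← map_mul, ← map_sum, HopfAlgebra.sum_mul_antipode_eq_algebraMap_counit rh]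
      exact AlgHomClass.commutes j _
    calc ∑ m ∈ rh.index,
          ra.left i * j (rh.left m) *
            (j (HopfAlgebra.antipode (R := k) (rh.right m)) *
             j (HopfAlgebra.antipode (R := k) (π (ra.right i))))
        = ra.left i * ((∑ m ∈ rh.index,
            j (rh.left m) * j (HopfAlgebra.antipode (R := k) (rh.right m))) *
              j (HopfAlgebra.antipode (R := k) (π (ra.right i)))) := by
          rw [Finset.sum_mul, Finset.mul_sum]
          exact Finset.sum_congr rfl fun m _ => by simp [mul_assoc]
      _ = Coalgebra.counit (R := k) h •
            (ra.left i * j (HopfAlgebra.antipode (R := k) (π (ra.right i)))) := by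
          rw [hmid, ← Algebra.smul_def, mul_smul_comm]
end Main
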